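/- Let G = K ⋊_θ Q. Suppose there exist q ≠ 1 in Q with finite conjugacy class in Q and k ∈ K whose orbit under θ(Q) is finite, such that θ_q is conjugation by k (i.e., θ_q(x) = k⁻¹xk for all x ∈ K). Then G is not icc. -/
import Mathlib


/-- The conjugacy class of `u` in `G`. -/
def conjClass {G : Type*} [Group G] (u : G) : Set G := {x | IsConj u x}

/-- A group is icc if it is nontrivial and every nontrivial conjugacy class is infinite. -/
def IsICC (G : Type*) [Group G] : Prop :=
  Nontrivial G ∧ ∀ g : G, g ≠ 1 → (conjClass g).Infinite

theorem not_icc_of_inner_with_finite_orbit {K Q : Type*} [Group K] [Group Q]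
    (θ : Q →* MulAut K) (q : Q) (hq : q ≠ 1) (hqFC : (conjClass q).Finite)
    (k : K) (horb : (Set.range fun p : Q => θ p k).Finite)
    (hconj : ∀ x : K, θ q x = k⁻¹ * x * k) :
    ¬ IsICC (K ⋊[θ] Q) := by
  rintro ⟨_, hinf⟩
  have hω : (⟨k, q⟩ : K ⋊[θ] Q) ≠ 1 := by
    intro h
    exact hq (congrArg SemidirectProduct.right h)
  refine hinf ⟨k, q⟩ hω ?_
  have key : conjClass (⟨k, q⟩ : K ⋊[θ] Q) ⊆
      (fun x : K × Q => (⟨x.1, x.2⟩ : K ⋊[θ] Q)) ''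
        ((Set.range fun p : Q => θ p k) ×ˢ conjClass q) := by
    rintro x hx
    obtain ⟨g, hg⟩ := isConj_iff.mp hx
    refine ⟨(θ g.right k, g.right * q * g.right⁻¹),
      ⟨⟨g.right, rfl⟩, isConj_iff.mpr ⟨g.right, rfl⟩⟩, ?_⟩
    obtain ⟨a, p⟩ := g
    subst hg
    have hL : (⟨a, p⟩ * (⟨k, q⟩ : K ⋊[θ] Q) * ⟨a, p⟩⁻¹).left = θ p k := by
      show a * θ p k * θ (p * q) (θ p⁻¹ a⁻¹) = θ p k
      have : θ (p * q) (θ p⁻¹ a⁻¹) = (θ p k)⁻¹ * a⁻¹ * θ p k := by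
        rw [map_mul, MulAut.mul_apply, hconj, map_mul, map_mul]
        simp [map_inv]
      rw [this]
      group
    have hR : (⟨a, p⟩ * (⟨k, q⟩ : K ⋊[θ] Q) * ⟨a, p⟩⁻¹).right = p * q * p⁻¹ := rfl
    ext
    · rw [hL]
    · rw [hR]
  exact ((horb.prod hqFC).image _).subset key
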